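/- Let (Q, ≤) be a well-quasi-order. Then every downward closed subset D of Q can be written as a finite union of ideals, i.e., a finite union of downward closed subsets each of which is (upward) directed. -/

import Mathlib

theorem wqo_downset_finite_union_of_ideals {Q : Type*} [Preorder Q]
    (hwqo : ∀ f : ℕ → Q, ∃ i j : ℕ, i < j ∧ f i ≤ f j)
    (D : Set Q) (hD : ∀ x y : Q, x ≤ y → y ∈ D → x ∈ D) :
    ∃ (n : ℕ) (I : Fin n → Set Q),
      (∀ k, (∀ x y : Q, x ≤ y → y ∈ I k → x ∈ I k) ∧
        (∀ a ∈ I k, ∀ b ∈ I k, ∃ c ∈ I k, a ≤ c ∧ b ≤ c)) ∧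
      D = ⋃ k, I k := by
  classical
  -- the type of downward closed sets
  let Dn : Type _ := {S : Set Q // ∀ x y : Q, x ≤ y → y ∈ S → x ∈ S}
  -- strict inclusion on downsets is well-founded
  have hwf : WellFounded (fun A B : Dn => (A : Set Q) ⊂ (B : Set Q)) := by
    haveI : IsIrrefl Dn (fun A B : Dn => (A : Set Q) ⊂ (B : Set Q)) :=
      ⟨fun _ h => ssubset_irrefl _ h⟩
    haveI : IsTrans Dn (fun A B : Dn => (A : Set Q) ⊂ (B : Set Q)) :=
      ⟨fun _ _ _ h1 h2 => h1.trans h2⟩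
    haveI : IsStrictOrder Dn (fun A B : Dn => (A : Set Q) ⊂ (B : Set Q)) := { }
    rw [RelEmbedding.wellFounded_iff_isEmpty]
    constructor
    intro f
    have hss : ∀ n : ℕ, ((f (n + 1)).1 : Set Q) ⊂ (f n).1 := fun n =>
      f.map_rel_iff.mpr (Nat.lt_succ_self n)
    have hmono : ∀ i j : ℕ, i ≤ j → ((f j).1 : Set Q) ⊆ (f i).1 := by
      intro i j hij
      induction hij with
      | refl => exact subset_rfl
      | step _ ih => exact (hss _).1.trans ih
    have hex : ∀ n : ℕ, ∃ x, x ∈ (f n).1 ∧ x ∉ (f (n + 1)).1 := fun n =>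
      Set.exists_of_ssubset (hss n)
    let g : ℕ → Q := fun n => (hex n).choose
    obtain ⟨i, j, hij, hle⟩ := hwqo g
    have hgj : g j ∈ (f (i + 1)).1 := hmono (i + 1) j hij (hex j).choose_spec.1
    exact (hex i).choose_spec.2 ((f (i + 1)).2 _ _ hle hgj)
  -- main induction: every downset is a finite (list) union of ideals
  have main : ∀ S : Dn, ∃ L : List (Set Q),
      (∀ I ∈ L, (∀ x y : Q, x ≤ y → y ∈ I → x ∈ I) ∧
        (∀ a ∈ I, ∀ b ∈ I, ∃ c ∈ I, a ≤ c ∧ b ≤ c)) ∧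
      ∀ x, x ∈ (S : Set Q) ↔ ∃ I ∈ L, x ∈ I := by
    intro S
    refine hwf.induction
      (C := fun S : Dn => ∃ L : List (Set Q),
        (∀ I ∈ L, (∀ x y : Q, x ≤ y → y ∈ I → x ∈ I) ∧
          (∀ a ∈ I, ∀ b ∈ I, ∃ c ∈ I, a ≤ c ∧ b ≤ c)) ∧
        ∀ x, x ∈ (S : Set Q) ↔ ∃ I ∈ L, x ∈ I) S ?_
    intro S IH
    by_cases hdir : ∀ a ∈ S.1, ∀ b ∈ S.1, ∃ c ∈ S.1, a ≤ c ∧ b ≤ c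
    · exact ⟨[S.1], by simpa using ⟨S.2, hdir⟩, by simp⟩
    · push_neg at hdir
      obtain ⟨a, ha, b, hb, hnoc⟩ := hdir
      have hdown : ∀ q : Q, ∀ x y : Q, x ≤ y → y ∈ {x ∈ S.1 | ¬ q ≤ x} →
          x ∈ {x ∈ S.1 | ¬ q ≤ x} := by
        rintro q x y hxy ⟨hyS, hqy⟩
        exact ⟨S.2 x y hxy hyS, fun hqa => hqy (hqa.trans hxy)⟩
      have hsub : ∀ q : Q, q ∈ S.1 → {x ∈ S.1 | ¬ q ≤ x} ⊂ S.1 := fun q hq =>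
        ⟨fun x hx => hx.1, fun hcon => (hcon hq).2 le_rfl⟩
      obtain ⟨L1, hL1, hiff1⟩ := IH ⟨_, hdown a⟩ (hsub a ha)
      obtain ⟨L2, hL2, hiff2⟩ := IH ⟨_, hdown b⟩ (hsub b hb)
      refine ⟨L1 ++ L2, ?_, ?_⟩
      · intro I hI
        rcases List.mem_append.mp hI with h | h
        · exact hL1 I h
        · exact hL2 I h
      · intro x
        constructor
        · intro hx
          by_cases hax : a ≤ x
          · have hbx : ¬ b ≤ x := fun hbx => (hnoc x hx hax hbx)
            obtain ⟨I, hI, hxI⟩ := (hiff2 x).mp ⟨hx, hbx⟩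
            exact ⟨I, List.mem_append.mpr (Or.inr hI), hxI⟩
          · obtain ⟨I, hI, hxI⟩ := (hiff1 x).mp ⟨hx, hax⟩
            exact ⟨I, List.mem_append.mpr (Or.inl hI), hxI⟩
        · rintro ⟨I, hI, hxI⟩
          rcases List.mem_append.mp hI with h | h
          · exact ((hiff1 x).mpr ⟨I, h, hxI⟩).1
          · exact ((hiff2 x).mpr ⟨I, h, hxI⟩).1
  obtain ⟨L, hL, hiff⟩ := main ⟨D, hD⟩
  refine ⟨L.length, fun k => L.get k, fun k => hL _ (L.get_mem k), ?_⟩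
  ext x
  rw [Set.mem_iUnion]
  rw [show (x ∈ D) = (x ∈ ((⟨D, hD⟩ : Dn) : Set Q)) from rfl, hiff x]
  constructor
  · rintro ⟨I, hI, hxI⟩
    obtain ⟨k, hk, rfl⟩ := List.mem_iff_get.mp hI
    exact ⟨k, hxI⟩
  · rintro ⟨k, hk⟩
    exact ⟨L.get k, L.get_mem k, hk⟩
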